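/- Let k be a field and φ ∈ k(X). If the derivative φ′(X) is not identically zero, then for every positive integer n, the rational function φ^n(X) − t is separable over the rational function field k(t); that is, writing φ^n(X) − t = f/g with f, g ∈ k(t)[X] coprime, the polynomial f is separable over k(t). -/

import Mathlib

open Polynomial
open scoped Classical

noncomputable section

variable {k : Type*} [Field k]

/-- The derivative `φ'` of a rational function `φ = num/denom`, given by the quotient rule. -/
noncomputable def ratDeriv (φ : RatFunc k) : RatFunc k :=
  (algebraMap (Polynomial k) (RatFunc k) (derivative φ.num) *
        algebraMap (Polynomial k) (RatFunc k) φ.denom -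
      algebraMap (Polynomial k) (RatFunc k) φ.num *
        algebraMap (Polynomial k) (RatFunc k) (derivative φ.denom)) /
    algebraMap (Polynomial k) (RatFunc k) φ.denom ^ 2

/-- Composition of rational functions: `φ ∘ ψ`. -/
noncomputable def ratComp (φ ψ : RatFunc k) : RatFunc k :=
  φ.num.eval₂ RatFunc.C ψ / φ.denom.eval₂ RatFunc.C ψ

/-- The `n`-fold composition `φ^n` of a rational function with itself (`φ^0 = X`). -/
noncomputable def ratIter (φ : RatFunc k) : ℕ → RatFunc k
  | 0 => RatFunc.X
  | n + 1 => ratComp φ (ratIter φ n)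

/-- The polynomial `φ^n(X) - t` regarded as a polynomial in `X` with coefficients in the
rational function field `k(t)` (here `t` is `RatFunc.X`): writing `φ^n = u/v` with `u,v`
coprime, this is the (coprime) numerator `u(X) - t·v(X)` of `φ^n(X) - t`. -/
noncomputable def iterMinusT (φ : RatFunc k) (n : ℕ) : Polynomial (RatFunc k) :=
  ((ratIter φ n).num).map (RatFunc.C : k →+* RatFunc k) -
    Polynomial.C RatFunc.X * ((ratIter φ n).denom).map (RatFunc.C : k →+* RatFunc k)

end

section Aux

variable {k : Type*} [Field k]

open Polynomial

lemma ratCross {p q : Polynomial k} (hq : q ≠ 0) {x : RatFunc k}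
    (hx : x = algebraMap (Polynomial k) (RatFunc k) p / algebraMap (Polynomial k) (RatFunc k) q) :
    x.num * q = x.denom * p := by
  have h1 : (algebraMap (Polynomial k) (RatFunc k)) x.denom ≠ 0 :=
    RatFunc.algebraMap_ne_zero x.denom_ne_zero
  have h2 : (algebraMap (Polynomial k) (RatFunc k)) q ≠ 0 := RatFunc.algebraMap_ne_zero hq
  have h3 := x.num_div_denom.trans hx
  rw [div_eq_div_iff h1 h2] at h3
  apply RatFunc.algebraMap_injective k
  rw [map_mul, map_mul, h3]
  ring

lemma ratDeriv_div {p q : Polynomial k} (hq : q ≠ 0) :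
    ratDeriv (algebraMap (Polynomial k) (RatFunc k) p / algebraMap (Polynomial k) (RatFunc k) q) =
      algebraMap (Polynomial k) (RatFunc k) (derivative p * q - p * derivative q) /
        algebraMap (Polynomial k) (RatFunc k) q ^ 2 := by
  set x : RatFunc k :=
    algebraMap (Polynomial k) (RatFunc k) p / algebraMap (Polynomial k) (RatFunc k) q with hx
  have h := ratCross hq hx
  have h' := congrArg derivative h
  rw [derivative_mul, derivative_mul] at h'
  have h1 : (algebraMap (Polynomial k) (RatFunc k)) x.denom ≠ 0 :=
    RatFunc.algebraMap_ne_zero x.denom_ne_zero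
  have h2 : (algebraMap (Polynomial k) (RatFunc k)) q ≠ 0 := RatFunc.algebraMap_ne_zero hq
  rw [ratDeriv, div_eq_div_iff (pow_ne_zero 2 h1) (pow_ne_zero 2 h2)]
  simp only [← map_pow, ← map_mul, ← map_sub]
  exact congrArg _ (by
    linear_combination (x.denom * q) * h' - (derivative x.denom * q + x.denom * derivative q) * h)
lemma ratDeriv_algebraMap (p : Polynomial k) :
    ratDeriv (algebraMap (Polynomial k) (RatFunc k) p) =
      algebraMap (Polynomial k) (RatFunc k) (derivative p) := by
  have h := ratDeriv_div (p := p) (q := 1) one_ne_zero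
  simpa using h

lemma ratDeriv_mul (x y : RatFunc k) :
    ratDeriv (x * y) = x * ratDeriv y + y * ratDeriv x := by
  obtain ⟨p, q, hq, rfl⟩ : ∃ p q, q ≠ 0 ∧
      x = algebraMap (Polynomial k) (RatFunc k) p / algebraMap (Polynomial k) (RatFunc k) q :=
    ⟨x.num, x.denom, x.denom_ne_zero, x.num_div_denom.symm⟩
  obtain ⟨r, s, hs, rfl⟩ : ∃ r s, s ≠ 0 ∧
      y = algebraMap (Polynomial k) (RatFunc k) r / algebraMap (Polynomial k) (RatFunc k) s :=
    ⟨y.num, y.denom, y.denom_ne_zero, y.num_div_denom.symm⟩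
  have h1 : (algebraMap (Polynomial k) (RatFunc k)) q ≠ 0 := RatFunc.algebraMap_ne_zero hq
  have h2 : (algebraMap (Polynomial k) (RatFunc k)) s ≠ 0 := RatFunc.algebraMap_ne_zero hs
  have hxy : (algebraMap (Polynomial k) (RatFunc k) p / algebraMap (Polynomial k) (RatFunc k) q) *
      (algebraMap (Polynomial k) (RatFunc k) r / algebraMap (Polynomial k) (RatFunc k) s) =
      algebraMap (Polynomial k) (RatFunc k) (p * r) / algebraMap (Polynomial k) (RatFunc k) (q * s) := by
    rw [map_mul, map_mul]; ring
  rw [hxy, ratDeriv_div (mul_ne_zero hq hs), ratDeriv_div hq, ratDeriv_div hs]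
  rw [div_eq_iff (pow_ne_zero 2 (RatFunc.algebraMap_ne_zero (mul_ne_zero hq hs)))]
  field_simp
  simp only [← map_pow, ← map_mul, ← map_sub, ← map_add]
  exact congrArg _ (by simp only [derivative_mul, derivative_add]; ring)

lemma ratDeriv_add (x y : RatFunc k) :
    ratDeriv (x + y) = ratDeriv x + ratDeriv y := by
  obtain ⟨p, q, hq, rfl⟩ : ∃ p q, q ≠ 0 ∧
      x = algebraMap (Polynomial k) (RatFunc k) p / algebraMap (Polynomial k) (RatFunc k) q :=
    ⟨x.num, x.denom, x.denom_ne_zero, x.num_div_denom.symm⟩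
  obtain ⟨r, s, hs, rfl⟩ : ∃ r s, s ≠ 0 ∧
      y = algebraMap (Polynomial k) (RatFunc k) r / algebraMap (Polynomial k) (RatFunc k) s :=
    ⟨y.num, y.denom, y.denom_ne_zero, y.num_div_denom.symm⟩
  have h1 : (algebraMap (Polynomial k) (RatFunc k)) q ≠ 0 := RatFunc.algebraMap_ne_zero hq
  have h2 : (algebraMap (Polynomial k) (RatFunc k)) s ≠ 0 := RatFunc.algebraMap_ne_zero hs
  have hxy : (algebraMap (Polynomial k) (RatFunc k) p / algebraMap (Polynomial k) (RatFunc k) q) +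
      (algebraMap (Polynomial k) (RatFunc k) r / algebraMap (Polynomial k) (RatFunc k) s) =
      algebraMap (Polynomial k) (RatFunc k) (p * s + r * q) /
        algebraMap (Polynomial k) (RatFunc k) (q * s) := by
    rw [map_mul, map_add, map_mul, map_mul]
    field_simp
  rw [hxy, ratDeriv_div (mul_ne_zero hq hs), ratDeriv_div hq, ratDeriv_div hs]
  rw [div_eq_iff (pow_ne_zero 2 (RatFunc.algebraMap_ne_zero (mul_ne_zero hq hs)))]
  field_simp
  simp only [← map_pow, ← map_mul, ← map_sub, ← map_add]
  exact congrArg _ (by simp only [derivative_mul, derivative_add]; ring)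

lemma ratDeriv_div_eq (x y : RatFunc k) (hy : y ≠ 0) :
    ratDeriv (x / y) = (ratDeriv x * y - x * ratDeriv y) / y ^ 2 := by
  obtain ⟨z, rfl⟩ : ∃ z, x = z * y := ⟨x / y, (div_mul_cancel₀ x hy).symm⟩
  rw [mul_div_assoc, div_self hy, mul_one, ratDeriv_mul]
  field_simp
  ring
lemma ratDeriv_aeval (ψ : RatFunc k) (p : Polynomial k) :
    ratDeriv (Polynomial.aeval ψ p) = Polynomial.aeval ψ (derivative p) * ratDeriv ψ := by
  induction p using Polynomial.induction_on with
  | C a =>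
      rw [aeval_C, derivative_C, map_zero, zero_mul, RatFunc.algebraMap_eq_C,
        ← RatFunc.algebraMap_C, ratDeriv_algebraMap, derivative_C, map_zero]
  | add p q hp hq =>
      rw [map_add, ratDeriv_add, hp, hq, derivative_add, map_add, add_mul]
  | monomial n a ih =>
      have e1 : (Polynomial.C a * X ^ (n + 1) : Polynomial k) = Polynomial.C a * X ^ n * X := by
        ring
      have e2 : derivative (Polynomial.C a * X ^ n * X) =
          Polynomial.C a * X ^ n + X * derivative (Polynomial.C a * X ^ n) := by
        rw [derivative_mul, derivative_X, mul_one]; ring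
      rw [e1, map_mul, aeval_X, ratDeriv_mul, ih, e2]
      simp only [map_mul, map_add, aeval_X]
      ring

lemma transcendental_ratFuncX : Transcendental k (RatFunc.X : RatFunc k) := by
  have h := (Polynomial.transcendental_X k).ringHom_of_comp_eq (RingHom.id k)
    (algebraMap (Polynomial k) (RatFunc k)) Function.surjective_id
    (RatFunc.algebraMap_injective k)
    (by ext x; simp [IsScalarTower.algebraMap_apply k (Polynomial k) (RatFunc k)])
  rwa [RatFunc.algebraMap_X] at h

lemma aeval_ne_zero_of_transcendental {ψ : RatFunc k} (hψ : Transcendental k ψ)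
    {p : Polynomial k} (hp : p ≠ 0) : Polynomial.aeval ψ p ≠ 0 :=
  fun h => hp (transcendental_iff.mp hψ p h)

lemma ratComp_eq_aeval (φ ψ : RatFunc k) :
    ratComp φ ψ = Polynomial.aeval ψ φ.num / Polynomial.aeval ψ φ.denom := by
  rw [ratComp]
  congr 1 <;> rw [Polynomial.aeval_def, RatFunc.algebraMap_eq_C]

lemma wronskian_ne_zero {ψ : RatFunc k} (h : ratDeriv ψ ≠ 0) :
    derivative ψ.num * ψ.denom - ψ.num * derivative ψ.denom ≠ 0 := by
  intro h0
  apply h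
  rw [ratDeriv, ← map_mul, ← map_mul, ← map_sub, h0, map_zero, zero_div]

lemma ratDeriv_ratComp_ne_zero {φ ψ : RatFunc k} (hφ : ratDeriv φ ≠ 0)
    (hψt : Transcendental k ψ) (hψd : ratDeriv ψ ≠ 0) :
    ratDeriv (ratComp φ ψ) ≠ 0 := by
  have hW := wronskian_ne_zero hφ
  have hQ : Polynomial.aeval ψ φ.denom ≠ 0 :=
    aeval_ne_zero_of_transcendental hψt φ.denom_ne_zero
  rw [ratComp_eq_aeval, ratDeriv_div_eq _ _ hQ, ratDeriv_aeval, ratDeriv_aeval]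
  have e : Polynomial.aeval ψ (derivative φ.num) * ratDeriv ψ * Polynomial.aeval ψ φ.denom -
      Polynomial.aeval ψ φ.num * (Polynomial.aeval ψ (derivative φ.denom) * ratDeriv ψ) =
      Polynomial.aeval ψ (derivative φ.num * φ.denom - φ.num * derivative φ.denom) * ratDeriv ψ := by
    rw [map_sub, map_mul, map_mul]; ring
  rw [e]
  exact div_ne_zero (mul_ne_zero (aeval_ne_zero_of_transcendental hψt hW) hψd) (pow_ne_zero 2 hQ)
lemma transcendental_ratComp {φ ψ : RatFunc k} (hφc : ∀ c : k, φ ≠ RatFunc.C c)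
    (hψ : Transcendental k ψ) : Transcendental k (ratComp φ ψ) := by
  intro halg
  set χ := ratComp φ ψ with hχ
  haveI : FiniteDimensional k (IntermediateField.adjoin k ({χ} : Set (RatFunc k))) :=
    IntermediateField.adjoin.finiteDimensional halg.isIntegral
  set A := IntermediateField.adjoin k ({χ} : Set (RatFunc k)) with hA
  set χ₀ : A := IntermediateField.AdjoinSimple.gen k χ with hχ₀
  set R₀ : Polynomial A := φ.num.map (algebraMap k A) -
      Polynomial.C χ₀ * φ.denom.map (algebraMap k A) with hR₀
  have hgen : algebraMap A (RatFunc k) χ₀ = χ := IntermediateField.AdjoinSimple.algebraMap_gen k χ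
  have hcomp : (algebraMap A (RatFunc k)).comp (algebraMap k A) = RatFunc.C := by
    rw [← IsScalarTower.algebraMap_eq, RatFunc.algebraMap_eq_C]
  have hmap : R₀.map (algebraMap A (RatFunc k)) =
      φ.num.map RatFunc.C - Polynomial.C χ * φ.denom.map RatFunc.C := by
    rw [hR₀, Polynomial.map_sub, Polynomial.map_mul, Polynomial.map_C, Polynomial.map_map,
      Polynomial.map_map, hcomp, hgen]
  have hR0 : R₀ ≠ 0 := by
    intro h0
    have h1 : φ.num.map (RatFunc.C : k →+* RatFunc k) =
        Polynomial.C χ * φ.denom.map RatFunc.C := by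
      have h2 := hmap
      rw [h0, Polynomial.map_zero] at h2
      exact sub_eq_zero.mp h2.symm
    set j := φ.denom.natDegree with hj
    have hcoef := congrArg (fun P => Polynomial.coeff P j) h1
    simp only [Polynomial.coeff_map, Polynomial.coeff_C_mul] at hcoef
    have hvj : φ.denom.coeff j ≠ 0 := by
      rw [hj, Polynomial.coeff_natDegree]
      exact Polynomial.leadingCoeff_ne_zero.mpr φ.denom_ne_zero
    have hCvj : (RatFunc.C (φ.denom.coeff j) : RatFunc k) ≠ 0 := by
      rw [← RatFunc.algebraMap_C]
      exact RatFunc.algebraMap_ne_zero (by simpa using hvj)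
    set c := φ.num.coeff j / φ.denom.coeff j with hc
    have hχc : χ = RatFunc.C c := by
      rw [hc, map_div₀, eq_div_iff hCvj, hcoef]
    have hnum : φ.num = Polynomial.C c * φ.denom := by
      ext m
      have h2 := congrArg (fun P => Polynomial.coeff P m) h1
      simp only [Polynomial.coeff_map, Polynomial.coeff_C_mul, hχc, ← map_mul] at h2
      rw [Polynomial.coeff_C_mul]
      exact RatFunc.C.injective h2
    apply hφc c
    rw [← φ.num_div_denom, hnum, map_mul, mul_div_assoc,
      div_self (RatFunc.algebraMap_ne_zero φ.denom_ne_zero), mul_one, RatFunc.algebraMap_C]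
  have halgψ : IsAlgebraic A ψ := by
    refine ⟨R₀, hR0, ?_⟩
    have he : Polynomial.aeval ψ R₀ = Polynomial.eval ψ (R₀.map (algebraMap A (RatFunc k))) := by
      rw [Polynomial.aeval_def, Polynomial.eval₂_eq_eval_map]
    have hEQ : Polynomial.aeval ψ φ.denom ≠ 0 :=
      aeval_ne_zero_of_transcendental hψ φ.denom_ne_zero
    rw [he, hmap]
    simp only [Polynomial.eval_sub, Polynomial.eval_mul, Polynomial.eval_C, Polynomial.eval_map]
    rw [← RatFunc.algebraMap_eq_C, ← Polynomial.aeval_def, ← Polynomial.aeval_def, hχ,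
      ratComp_eq_aeval]
    field_simp
    ring
  haveI : Algebra.IsIntegral k A := Algebra.IsIntegral.of_finite k A
  exact hψ (isIntegral_trans ψ halgψ.isIntegral).isAlgebraic
lemma nonconst_of_ratDeriv_ne_zero {φ : RatFunc k} (hder : ratDeriv φ ≠ 0) :
    ∀ c : k, φ ≠ RatFunc.C c := by
  intro c h
  apply hder
  rw [h, ← RatFunc.algebraMap_C, ratDeriv_algebraMap, derivative_C, map_zero]

lemma transcendental_ratIter {φ : RatFunc k} (hφc : ∀ c : k, φ ≠ RatFunc.C c) (n : ℕ) :
    Transcendental k (ratIter φ n) := by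
  induction n with
  | zero => exact transcendental_ratFuncX
  | succ n ih => exact transcendental_ratComp hφc ih

lemma ratDeriv_X : ratDeriv (RatFunc.X : RatFunc k) = 1 := by
  have h : (RatFunc.X : RatFunc k) =
      algebraMap (Polynomial k) (RatFunc k) X / algebraMap (Polynomial k) (RatFunc k) 1 := by
    simp [RatFunc.algebraMap_X]
  rw [h, ratDeriv_div one_ne_zero]
  simp

lemma ratDeriv_ratIter_ne_zero {φ : RatFunc k} (hder : ratDeriv φ ≠ 0) (n : ℕ) :
    ratDeriv (ratIter φ n) ≠ 0 := by
  induction n with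
  | zero =>
      show ratDeriv (RatFunc.X : RatFunc k) ≠ 0
      rw [ratDeriv_X]
      exact one_ne_zero
  | succ n ih =>
      exact ratDeriv_ratComp_ne_zero hder
        (transcendental_ratIter (nonconst_of_ratDeriv_ne_zero hder) n) ih

end Aux

/-- If `φ'(X) ≠ 0`, then for every positive integer `n` the rational function `φ^n(X) - t`
is separable over `k(t)`; i.e. its coprime numerator is a separable polynomial. -/
theorem iterMinusT_separable {k : Type*} [Field k] (φ : RatFunc k)
    (hder : ratDeriv φ ≠ 0) (n : ℕ) (hn : 1 ≤ n) :
    (iterMinusT φ n).Separable := by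
  classical
  set ψ := ratIter φ n with hψdef
  set t : RatFunc k := RatFunc.X with ht
  set u := ψ.num with hu
  set v := ψ.denom with hv
  have hψd : ratDeriv ψ ≠ 0 := ratDeriv_ratIter_ne_zero hder n
  have hW : derivative u * v - u * derivative v ≠ 0 := wronskian_ne_zero hψd
  have hfdef : iterMinusT φ n = u.map RatFunc.C - Polynomial.C t * v.map RatFunc.C := rfl
  have hfder : derivative (u.map (RatFunc.C : k →+* RatFunc k) -
      Polynomial.C t * v.map RatFunc.C) =
      (derivative u).map RatFunc.C - Polynomial.C t * (derivative v).map RatFunc.C := by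
    rw [derivative_sub, derivative_map, Polynomial.derivative_C_mul, derivative_map]
  set F := AlgebraicClosure (RatFunc k) with hF
  rw [Polynomial.separable_def, hfdef, hfder, ← RatFunc.algebraMap_eq_C]
  refine (Polynomial.isCoprime_iff_aeval_ne_zero_of_isAlgClosed (k := RatFunc k) F _ _).mpr ?_
  intro α
  by_contra hcon
  push_neg at hcon
  obtain ⟨h1, h2⟩ := hcon
  simp only [map_sub, map_mul, Polynomial.aeval_C, Polynomial.aeval_map_algebraMap] at h1 h2
  set T : F := algebraMap (RatFunc k) F t with hT
  have heval1 : Polynomial.aeval α u = T * Polynomial.aeval α v := sub_eq_zero.mp h1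
  have heval2 : Polynomial.aeval α (derivative u) = T * Polynomial.aeval α (derivative v) :=
    sub_eq_zero.mp h2
  have hTt : Transcendental k T := by
    have h := (transcendental_ratFuncX (k := k)).ringHom_of_comp_eq (RingHom.id k)
      (algebraMap (RatFunc k) F) Function.surjective_id (algebraMap (RatFunc k) F).injective
      (by ext x; simp [IsScalarTower.algebraMap_apply k (RatFunc k) F])
    exact h
  by_cases hvα : Polynomial.aeval α v = 0
  · have huα : Polynomial.aeval α u = 0 := by rw [heval1, hvα, mul_zero]
    obtain ⟨a, b, hab⟩ := RatFunc.isCoprime_num_denom ψ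
    have h3 := congrArg (Polynomial.aeval α) hab
    simp only [map_add, map_mul, map_one, ← hu, ← hv, huα, hvα, mul_zero, add_zero,
      zero_add] at h3
    exact one_ne_zero h3.symm
  · have hWα : Polynomial.aeval α (derivative u * v - u * derivative v) = 0 := by
      rw [map_sub, map_mul, map_mul, heval1, heval2]; ring
    have halgα : IsAlgebraic k α := ⟨_, hW, hWα⟩
    haveI : FiniteDimensional k (IntermediateField.adjoin k ({α} : Set F)) :=
      IntermediateField.adjoin.finiteDimensional halgα.isIntegral
    set A := IntermediateField.adjoin k ({α} : Set F) with hA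
    set α₀ : A := IntermediateField.AdjoinSimple.gen k α with hα₀
    have hgen : algebraMap A F α₀ = α := IntermediateField.AdjoinSimple.algebraMap_gen k α
    have hAu : Polynomial.aeval α u = algebraMap A F (Polynomial.aeval α₀ u) := by
      rw [← hgen]
      exact Polynomial.aeval_algHom_apply (IsScalarTower.toAlgHom k A F) α₀ u
    have hAv : Polynomial.aeval α v = algebraMap A F (Polynomial.aeval α₀ v) := by
      rw [← hgen]
      exact Polynomial.aeval_algHom_apply (IsScalarTower.toAlgHom k A F) α₀ v
    have hTeq : T = algebraMap A F (Polynomial.aeval α₀ u / Polynomial.aeval α₀ v) := by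
      rw [map_div₀, ← hAu, ← hAv, eq_div_iff hvα]
      exact heval1.symm
    have halgT : IsAlgebraic k T := by
      rw [hTeq]
      haveI : Algebra.IsIntegral k A := Algebra.IsIntegral.of_finite k A
      exact ((Algebra.IsIntegral.isIntegral _).map (IsScalarTower.toAlgHom k A F)).isAlgebraic
    exact hTt halgT
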